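/- Let γ₁, γ₂, γ₃ ≥ 0 be real numbers with γ₁ ≤ γ₂ + γ₃ + 1 and γ₁ ≥ γ₃. Then there exists B₂ > 0 (depending on γ₁, γ₂, γ₃, ν) such that for all f ∈ E^d_{(ν,β,μ,Γ,ε)}, ‖τ^{−γ₁} ∫₀^τ (τ−s)^{γ₂} s^{γ₃} f(s,m) ds‖_{(ν,β,μ,Γ,ε)} ≤ B₂ ‖f‖_{(ν,β,μ,Γ,ε)} |ε|^{Γ(γ₂+γ₃+1) − Γγ₁}. -/

import Mathlib

open MeasureTheory Set

noncomputable def B2c (γ₂ ν a : ℝ) : ℝ :=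
  2 * (1 + ((Nat.ceil a + 2).factorial : ℝ) * (2 / ν) ^ (Nat.ceil a + 2))
    + Real.Gamma (γ₂ + 1) * 4 / ν ^ (γ₂ + 1) + Real.exp ν

lemma B2c_pos (γ₂ ν a : ℝ) (hγ₂ : 0 ≤ γ₂) (hν : 0 < ν) : 0 < B2c γ₂ ν a := by
  have h1 : (0:ℝ) ≤ ((Nat.ceil a + 2).factorial : ℝ) * (2 / ν) ^ (Nat.ceil a + 2) := by positivity
  have h2 : (0:ℝ) ≤ Real.Gamma (γ₂ + 1) * 4 / ν ^ (γ₂ + 1) := by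
    have := Real.Gamma_pos_of_pos (show (0:ℝ) < γ₂ + 1 by linarith)
    positivity
  have h3 : (0:ℝ) < Real.exp ν := Real.exp_pos ν
  unfold B2c; linarith

lemma pow_le_fact_mul_exp (n : ℕ) {x : ℝ} (hx : 0 ≤ x) :
    x ^ n ≤ (n.factorial : ℝ) * Real.exp x := by
  have h := Real.pow_div_factorial_le_exp (x := x) hx n
  have hn : (0:ℝ) < (n.factorial : ℝ) := by positivity
  rw [div_le_iff₀ hn] at h
  linarith [h]

lemma rpow_le_one_add_pow {T : ℝ} (hT : 0 < T) {a : ℝ} (ha : 0 ≤ a) :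
    T ^ a ≤ 1 + T ^ (Nat.ceil a) := by
  rcases le_total T 1 with h | h
  · have h1 : T ^ a ≤ 1 := Real.rpow_le_one hT.le h ha
    have h2 : (0:ℝ) ≤ T ^ (Nat.ceil a) := by positivity
    linarith
  · have h1 : T ^ a ≤ T ^ ((Nat.ceil a : ℝ)) :=
      Real.rpow_le_rpow_of_exponent_le h (Nat.le_ceil a)
    rw [Real.rpow_natCast] at h1
    linarith

lemma pre_bound (ν a : ℝ) (hν : 0 < ν) (ha : 0 ≤ a) {T : ℝ} (hT : 0 < T) :
    (1 + T ^ 2) * T ^ a * Real.exp (-(ν * T) / 2) ≤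
      4 * (1 + ((Nat.ceil a + 2).factorial : ℝ) * (2 / ν) ^ (Nat.ceil a + 2)) := by
  set N := Nat.ceil a with hN
  set K : ℝ := ((N + 2).factorial : ℝ) * (2 / ν) ^ (N + 2) with hK
  have hexp : Real.exp (-(ν * T) / 2) = (Real.exp (ν * T / 2))⁻¹ := by
    rw [← Real.exp_neg]; ring_nf
  have hKnonneg : (0:ℝ) ≤ K := by positivity
  have hepos : (0:ℝ) < Real.exp (-(ν * T) / 2) := Real.exp_pos _
  have hele : Real.exp (-(ν * T) / 2) ≤ 1 := by
    rw [Real.exp_le_one_iff]; nlinarith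
  -- T^(N+2) * exp(-(νT)/2) ≤ K
  have hTK : T ^ (N + 2) * Real.exp (-(ν * T) / 2) ≤ K := by
    have h1 : (ν * T / 2) ^ (N + 2) ≤ ((N + 2).factorial : ℝ) * Real.exp (ν * T / 2) :=
      pow_le_fact_mul_exp _ (by positivity)
    have h2 : T ^ (N + 2) = (2 / ν) ^ (N + 2) * (ν * T / 2) ^ (N + 2) := by
      rw [← mul_pow]; congr 1; field_simp
    have h3 : Real.exp (ν * T / 2) * Real.exp (-(ν * T) / 2) = 1 := by
      rw [← Real.exp_add]
      have : ν * T / 2 + -(ν * T) / 2 = 0 := by ring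
      rw [this, Real.exp_zero]
    calc T ^ (N + 2) * Real.exp (-(ν * T) / 2)
        = (2 / ν) ^ (N + 2) * ((ν * T / 2) ^ (N + 2) * Real.exp (-(ν * T) / 2)) := by
          rw [h2]; ring
      _ ≤ (2 / ν) ^ (N + 2) * (((N + 2).factorial : ℝ) * Real.exp (ν * T / 2)
            * Real.exp (-(ν * T) / 2)) := by
          have := mul_le_mul_of_nonneg_right h1 hepos.le
          have h4 : (0:ℝ) ≤ (2 / ν) ^ (N + 2) := by positivity
          nlinarith [this]
      _ = K := by rw [mul_assoc ((N + 2).factorial : ℝ), h3, mul_one, hK]; ring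
  -- T^a ≤ 1 + T^N
  have hTa : T ^ a ≤ 1 + T ^ N := rpow_le_one_add_pow hT ha
  have hTapos : (0:ℝ) ≤ T ^ a := by positivity
  -- (1+T²)(1+T^N) ≤ 4(1+T^(N+2))
  have hpoly : (1 + T ^ 2) * (1 + T ^ N) ≤ 4 * (1 + T ^ (N + 2)) := by
    rcases le_total T 1 with h | h
    · have e2 : T ^ 2 ≤ 1 := pow_le_one₀ hT.le h
      have eN : T ^ N ≤ 1 := pow_le_one₀ hT.le h
      have eN2 : (0:ℝ) ≤ T ^ (N + 2) := by positivity
      nlinarith [e2, eN, eN2]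
    · have e2 : T ^ 2 ≤ T ^ (N + 2) := pow_le_pow_right₀ h (by omega)
      have eN : T ^ N ≤ T ^ (N + 2) := pow_le_pow_right₀ h (by omega)
      have emul : T ^ 2 * T ^ N = T ^ (N + 2) := by rw [← pow_add]; ring_nf
      nlinarith [pow_nonneg hT.le N, pow_nonneg hT.le 2, emul]
  calc (1 + T ^ 2) * T ^ a * Real.exp (-(ν * T) / 2)
      ≤ (1 + T ^ 2) * (1 + T ^ N) * Real.exp (-(ν * T) / 2) := by
        exact mul_le_mul_of_nonneg_right
          (mul_le_mul_of_nonneg_left hTa (by positivity)) hepos.le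
    _ ≤ 4 * (1 + T ^ (N + 2)) * Real.exp (-(ν * T) / 2) :=
        mul_le_mul_of_nonneg_right hpoly hepos.le
    _ = 4 * (Real.exp (-(ν * T) / 2) + T ^ (N + 2) * Real.exp (-(ν * T) / 2)) := by ring
    _ ≤ 4 * (1 + K) := by linarith [hele, hTK]

section Phi
variable (γ₂ γ₃ ν a T : ℝ)

lemma phi_integrable (hγ₂ : 0 ≤ γ₂) (hγ₃ : 0 ≤ γ₃) (hν : 0 ≤ ν) (hT : 0 ≤ T) :
    IntegrableOn (fun u : ℝ =>
      (1 - u) ^ γ₂ * u ^ γ₃ * Real.exp (ν * (u * T)) / (1 + (u * T) ^ 2)) (Ioo 0 1) := by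
  apply Measure.integrableOn_of_bounded (M := Real.exp (ν * T))
  · simp [Real.volume_Ioo]
  · apply Measurable.aestronglyMeasurable
    fun_prop
  · rw [ae_restrict_iff' measurableSet_Ioo]
    refine ae_of_all _ fun u hu => ?_
    obtain ⟨h0, h1⟩ := hu
    have p1 : (0:ℝ) ≤ (1 - u) ^ γ₂ := Real.rpow_nonneg (by linarith) _
    have p2 : (0:ℝ) ≤ u ^ γ₃ := Real.rpow_nonneg h0.le _
    have hnn : (0:ℝ) ≤ (1 - u) ^ γ₂ * u ^ γ₃ * Real.exp (ν * (u * T)) / (1 + (u * T) ^ 2) := by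
      apply div_nonneg _ (by nlinarith)
      exact mul_nonneg (mul_nonneg p1 p2) (Real.exp_pos _).le
    rw [Real.norm_eq_abs, abs_of_nonneg hnn]
    have e1 : (1 - u) ^ γ₂ ≤ 1 := Real.rpow_le_one (by linarith) (by linarith) hγ₂
    have e2 : u ^ γ₃ ≤ 1 := Real.rpow_le_one h0.le h1.le hγ₃
    have e3 : Real.exp (ν * (u * T)) ≤ Real.exp (ν * T) := by
      apply Real.exp_le_exp.2
      nlinarith [mul_nonneg (mul_nonneg hν (by linarith : (0:ℝ) ≤ 1 - u)) hT]
    have e4 : (1:ℝ) ≤ 1 + (u * T) ^ 2 := by nlinarith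
    calc (1 - u) ^ γ₂ * u ^ γ₃ * Real.exp (ν * (u * T)) / (1 + (u * T) ^ 2)
        ≤ (1 - u) ^ γ₂ * u ^ γ₃ * Real.exp (ν * (u * T)) / 1 := by
          apply div_le_div_of_nonneg_left _ one_pos e4 |>.trans_eq rfl
          positivity
      _ = (1 - u) ^ γ₂ * u ^ γ₃ * Real.exp (ν * (u * T)) := by ring
      _ ≤ 1 * 1 * Real.exp (ν * T) := by
          apply mul_le_mul (mul_le_mul e1 e2 p2 zero_le_one) e3 (Real.exp_pos _).le
          norm_num
      _ = Real.exp (ν * T) := by ring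

end Phi

section KeyB

variable {γ₂ γ₃ ν a T : ℝ}

set_option maxHeartbeats 2000000 in
lemma key_bound (hγ₂ : 0 ≤ γ₂) (hγ₃ : 0 ≤ γ₃) (hν : 0 < ν) (ha : 0 ≤ a)
    (ha' : a ≤ γ₂ + 1) (hT : 0 < T)
    (pre_bound : (1 + T ^ 2) * T ^ a * Real.exp (-(ν * T) / 2) ≤
      4 * (1 + ((Nat.ceil a + 2).factorial : ℝ) * (2 / ν) ^ (Nat.ceil a + 2)))
    (phi_int : IntegrableOn (fun u : ℝ =>
      (1 - u) ^ γ₂ * u ^ γ₃ * Real.exp (ν * (u * T)) / (1 + (u * T) ^ 2)) (Ioo 0 1)) :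
    (1 + T ^ 2) * Real.exp (-ν * T) * T ^ a *
      ∫ u in Ioo (0:ℝ) 1,
        (1 - u) ^ γ₂ * u ^ γ₃ * Real.exp (ν * (u * T)) / (1 + (u * T) ^ 2)
      ≤ B2c γ₂ ν a := by
  set φ : ℝ → ℝ :=
    fun u => (1 - u) ^ γ₂ * u ^ γ₃ * Real.exp (ν * (u * T)) / (1 + (u * T) ^ 2) with hφ
  clear_value φ
  have hφnonneg : ∀ u ∈ Ioo (0:ℝ) 1, 0 ≤ φ u := by
    intro u hu
    obtain ⟨h0, h1⟩ := hu
    have p1 : (0:ℝ) ≤ (1 - u) ^ γ₂ := Real.rpow_nonneg (by linarith) _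
    have p2 : (0:ℝ) ≤ u ^ γ₃ := Real.rpow_nonneg h0.le _
    rw [hφ]
    simp only []
    exact div_nonneg (mul_nonneg (mul_nonneg p1 p2) (Real.exp_pos _).le) (by positivity)
  have hsub1 : Ioc (0:ℝ) (1/2) ⊆ Ioo 0 1 := fun x hx => ⟨hx.1, lt_of_le_of_lt hx.2 (by norm_num)⟩
  have hsub2 : Ioo (1/2:ℝ) 1 ⊆ Ioo 0 1 := fun x hx => ⟨lt_trans (by norm_num) hx.1, hx.2⟩
  have hInt1 : IntegrableOn φ (Ioc 0 (1/2)) := phi_int.mono_set hsub1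
  have hInt2 : IntegrableOn φ (Ioo (1/2) 1) := phi_int.mono_set hsub2
  have hdisj : Disjoint (Ioc (0:ℝ) (1/2)) (Ioo (1/2:ℝ) 1) := by
    rw [Set.disjoint_left]
    rintro x ⟨_, h2⟩ ⟨h3, _⟩
    linarith
  have hsplit : ∫ u in Ioo (0:ℝ) 1, φ u =
      (∫ u in Ioc (0:ℝ) (1/2), φ u) + ∫ u in Ioo (1/2:ℝ) 1, φ u := by
    rw [← setIntegral_union hdisj measurableSet_Ioo hInt1 hInt2,
      Set.Ioc_union_Ioo_eq_Ioo (by norm_num) (by norm_num)]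
  set pref : ℝ := (1 + T ^ 2) * Real.exp (-ν * T) * T ^ a with hprefdef
  clear_value pref
  have hTa : (0:ℝ) ≤ T ^ a := Real.rpow_nonneg hT.le a
  have hprefpos : 0 < pref ∨ pref = 0 := by
    rcases eq_or_lt_of_le hTa with h | h
    · right; rw [hprefdef, ← h]; ring
    · left; rw [hprefdef]; positivity
  have hpref : (0:ℝ) ≤ pref := by rcases hprefpos with h | h; exacts [h.le, h.ge]
  -- piece 1
  have hI1 : ∫ u in Ioc (0:ℝ) (1/2), φ u ≤ Real.exp (ν * T / 2) * (1/2) := by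
    have hle : ∀ u ∈ Ioc (0:ℝ) (1/2), φ u ≤ Real.exp (ν * T / 2) := by
      intro u hu
      obtain ⟨h0, h1⟩ := hu
      have h1' : u < 1 := lt_of_le_of_lt h1 (by norm_num)
      have p1 : (0:ℝ) ≤ (1 - u) ^ γ₂ := Real.rpow_nonneg (by linarith) _
      have p2 : (0:ℝ) ≤ u ^ γ₃ := Real.rpow_nonneg h0.le _
      have e1 : (1 - u) ^ γ₂ ≤ 1 := Real.rpow_le_one (by linarith) (by linarith) hγ₂
      have e2 : u ^ γ₃ ≤ 1 := Real.rpow_le_one h0.le h1'.le hγ₃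
      have e3 : Real.exp (ν * (u * T)) ≤ Real.exp (ν * T / 2) := by
        apply Real.exp_le_exp.2
        nlinarith [mul_nonneg (mul_nonneg hν.le (by linarith : (0:ℝ) ≤ 1/2 - u)) hT.le]
      have e4 : (1:ℝ) ≤ 1 + (u * T) ^ 2 := by nlinarith [sq_nonneg (u*T)]
      calc φ u ≤ (1 - u) ^ γ₂ * u ^ γ₃ * Real.exp (ν * (u * T)) := by
            rw [hφ]
            apply div_le_of_le_mul₀ ?_ ?_ ?_
            · nlinarith [mul_nonneg (mul_nonneg p1 p2) (Real.exp_pos (ν * (u*T))).le]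
            · exact mul_nonneg (mul_nonneg p1 p2) (Real.exp_pos _).le
            · nlinarith [mul_nonneg (mul_nonneg p1 p2) (Real.exp_pos (ν * (u*T))).le]
        _ ≤ 1 * 1 * Real.exp (ν * T / 2) := by
            apply mul_le_mul (mul_le_mul e1 e2 p2 zero_le_one) e3 (Real.exp_pos _).le
            norm_num
        _ = Real.exp (ν * T / 2) := by ring
    calc ∫ u in Ioc (0:ℝ) (1/2), φ u
        ≤ ∫ _u in Ioc (0:ℝ) (1/2), Real.exp (ν * T / 2) := by
          apply setIntegral_mono_on hInt1 (integrableOn_const (by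
            simp [Real.volume_Ioc])) measurableSet_Ioc hle
      _ = Real.exp (ν * T / 2) * (1/2) := by
          rw [setIntegral_const, Real.volume_real_Ioc, smul_eq_mul]
          norm_num [mul_comm]
  -- prefactor * piece1 bound
  have hM1 : pref * (Real.exp (ν * T / 2) * (1/2)) ≤
      2 * (1 + ((Nat.ceil a + 2).factorial : ℝ) * (2 / ν) ^ (Nat.ceil a + 2)) := by
    have he : Real.exp (-ν * T) * Real.exp (ν * T / 2) = Real.exp (-(ν * T) / 2) := by
      rw [← Real.exp_add]; congr 1; ring
    have : pref * (Real.exp (ν * T / 2) * (1/2)) =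
        (1 + T ^ 2) * T ^ a * Real.exp (-(ν * T) / 2) / 2 := by
      rw [hprefdef, ← he]; ring
    rw [this]
    linarith [pre_bound]
  have hI2nonneg : (0:ℝ) ≤ ∫ u in Ioo (1/2:ℝ) 1, φ u :=
    setIntegral_nonneg measurableSet_Ioo fun u hu => hφnonneg u (hsub2 hu)
  have hI1nonneg : (0:ℝ) ≤ ∫ u in Ioc (0:ℝ) (1/2), φ u :=
    setIntegral_nonneg measurableSet_Ioc fun u hu => hφnonneg u (hsub1 hu)
  have hK : (0:ℝ) ≤ ((Nat.ceil a + 2).factorial : ℝ) * (2 / ν) ^ (Nat.ceil a + 2) := by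
    positivity
  have hM2nonneg : (0:ℝ) ≤ Real.Gamma (γ₂ + 1) * 4 / ν ^ (γ₂ + 1) := by
    have := Real.Gamma_pos_of_pos (show (0:ℝ) < γ₂ + 1 by linarith)
    positivity
  -- prefactor * piece2 bound
  have hM3 : pref * ∫ u in Ioo (1/2:ℝ) 1, φ u ≤
      Real.Gamma (γ₂ + 1) * 4 / ν ^ (γ₂ + 1) + Real.exp ν := by
    rcases le_total T 1 with hT1 | hT1
    · -- small T
      have b1 : Real.exp (-ν * T) ≤ 1 := by
        rw [Real.exp_le_one_iff]; nlinarith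
      have b2 : T ^ a ≤ 1 := Real.rpow_le_one hT.le hT1 ha
      have b3 : pref ≤ 2 := by
        have : pref ≤ (1 + T ^ 2) * 1 * 1 := by
          rw [hprefdef]
          apply mul_le_mul (mul_le_mul le_rfl b1 (Real.exp_pos _).le (by positivity)) b2 hTa
          positivity
        nlinarith [sq_nonneg T, this]
      have hI2 : ∫ u in Ioo (1/2:ℝ) 1, φ u ≤ Real.exp ν * (1/2) := by
        have hle : ∀ u ∈ Ioo (1/2:ℝ) 1, φ u ≤ Real.exp ν := by
          intro u hu
          obtain ⟨h0', h1⟩ := hu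
          have h0 : (0:ℝ) < u := by linarith
          have p1 : (0:ℝ) ≤ (1 - u) ^ γ₂ := Real.rpow_nonneg (by linarith) _
          have p2 : (0:ℝ) ≤ u ^ γ₃ := Real.rpow_nonneg h0.le _
          have e1 : (1 - u) ^ γ₂ ≤ 1 := Real.rpow_le_one (by linarith) (by linarith) hγ₂
          have e2 : u ^ γ₃ ≤ 1 := Real.rpow_le_one h0.le h1.le hγ₃
          have e3 : Real.exp (ν * (u * T)) ≤ Real.exp ν := by
            apply Real.exp_le_exp.2
            have huT : u * T ≤ 1 := by nlinarith
            nlinarith [mul_le_mul_of_nonneg_left huT hν.le]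
          have e4 : (1:ℝ) ≤ 1 + (u * T) ^ 2 := by nlinarith [sq_nonneg (u*T)]
          calc φ u ≤ (1 - u) ^ γ₂ * u ^ γ₃ * Real.exp (ν * (u * T)) := by
                rw [hφ]
                apply div_le_of_le_mul₀ ?_ ?_ ?_
                · nlinarith [mul_nonneg (mul_nonneg p1 p2) (Real.exp_pos (ν * (u*T))).le]
                · exact mul_nonneg (mul_nonneg p1 p2) (Real.exp_pos _).le
                · nlinarith [mul_nonneg (mul_nonneg p1 p2) (Real.exp_pos (ν * (u*T))).le]
            _ ≤ 1 * 1 * Real.exp ν := by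
                apply mul_le_mul (mul_le_mul e1 e2 p2 zero_le_one) e3 (Real.exp_pos _).le
                norm_num
            _ = Real.exp ν := by ring
        calc ∫ u in Ioo (1/2:ℝ) 1, φ u
            ≤ ∫ _u in Ioo (1/2:ℝ) 1, Real.exp ν := by
              apply setIntegral_mono_on hInt2 (integrableOn_const (by
                simp [Real.volume_Ioo])) measurableSet_Ioo hle
          _ = Real.exp ν * (1/2) := by
              rw [setIntegral_const, Real.volume_real_Ioo, smul_eq_mul]
              norm_num [mul_comm]
      have : pref * ∫ u in Ioo (1/2:ℝ) 1, φ u ≤ 2 * (Real.exp ν * (1/2)) :=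
        mul_le_mul b3 hI2 hI2nonneg (by norm_num)
      linarith
    · -- large T
      have hνT : (0:ℝ) < ν * T := by positivity
      set ψ : ℝ → ℝ := fun u => (1 - u) ^ γ₂ * Real.exp (-(ν * T * (1 - u))) with hψ
      clear_value ψ
      have hψnonneg : ∀ u ∈ Ioo (1/2:ℝ) 1, 0 ≤ ψ u := by
        intro u hu
        rw [hψ]
        exact mul_nonneg (Real.rpow_nonneg (by linarith [hu.2]) _) (Real.exp_pos _).le
      have hptwise : ∀ u ∈ Ioo (1/2:ℝ) 1, pref * φ u ≤ 4 * T ^ a * ψ u := by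
        intro u hu
        obtain ⟨h0', h1⟩ := hu
        have h0 : (0:ℝ) < u := by linarith
        have hD : (0:ℝ) < 1 + (u * T) ^ 2 := by positivity
        have p1 : (0:ℝ) ≤ (1 - u) ^ γ₂ := Real.rpow_nonneg (by linarith) _
        have p2 : (0:ℝ) ≤ u ^ γ₃ := Real.rpow_nonneg h0.le _
        have e2 : u ^ γ₃ ≤ 1 := Real.rpow_le_one h0.le h1.le hγ₃
        have key : (1 + T ^ 2) ≤ 4 * (1 + (u * T) ^ 2) := by
          nlinarith [mul_nonneg (by nlinarith : (0:ℝ) ≤ 4 * u ^ 2 - 1) (sq_nonneg T)]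
        have hE1 : Real.exp (-ν * T) * Real.exp (ν * (u * T)) =
            Real.exp (-(ν * T * (1 - u))) := by
          rw [← Real.exp_add]; congr 1; ring
        have hq : (0:ℝ) ≤ (1 - u) ^ γ₂ * Real.exp (-(ν * T * (1 - u))) * T ^ a :=
          mul_nonneg (mul_nonneg p1 (Real.exp_pos _).le) hTa
        calc pref * φ u
            = ((1 + T ^ 2) * u ^ γ₃) *
              ((1 - u) ^ γ₂ * (Real.exp (-ν * T) * Real.exp (ν * (u * T))) * T ^ a) /
                (1 + (u * T) ^ 2) := by rw [hprefdef, hφ]; ring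
          _ = ((1 + T ^ 2) * u ^ γ₃) *
              ((1 - u) ^ γ₂ * Real.exp (-(ν * T * (1 - u))) * T ^ a) /
                (1 + (u * T) ^ 2) := by rw [hE1]
          _ ≤ (4 * (1 + (u * T) ^ 2) * 1) *
              ((1 - u) ^ γ₂ * Real.exp (-(ν * T * (1 - u))) * T ^ a) /
                (1 + (u * T) ^ 2) := by
              apply (div_le_div_iff_of_pos_right hD).2
              exact mul_le_mul (mul_le_mul key e2 p2 (by positivity)) le_rfl hq
                (by positivity)
          _ = 4 * T ^ a * ψ u := by rw [hψ]; field_simp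
      have hψint : IntegrableOn ψ (Ioo (1/2:ℝ) 1) := by
        rw [hψ]
        apply Measure.integrableOn_of_bounded (M := 1)
        · simp [Real.volume_Ioo]
        · apply Measurable.aestronglyMeasurable; fun_prop
        · rw [ae_restrict_iff' measurableSet_Ioo]
          refine ae_of_all _ fun u hu => ?_
          obtain ⟨h0', h1⟩ := hu
          have p1 : (0:ℝ) ≤ (1 - u) ^ γ₂ := Real.rpow_nonneg (by linarith) _
          have e1 : (1 - u) ^ γ₂ ≤ 1 := Real.rpow_le_one (by linarith) (by linarith) hγ₂
          have e5 : Real.exp (-(ν * T * (1 - u))) ≤ 1 := by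
            rw [Real.exp_le_one_iff]
            nlinarith [mul_nonneg (mul_nonneg hν.le hT.le) (by linarith : (0:ℝ) ≤ 1 - u)]
          rw [Real.norm_eq_abs, abs_of_nonneg (by
            exact mul_nonneg p1 (Real.exp_pos _).le)]
          calc (1 - u) ^ γ₂ * Real.exp (-(ν * T * (1 - u))) ≤ 1 * 1 :=
                mul_le_mul e1 e5 (Real.exp_pos _).le zero_le_one
            _ = 1 := by norm_num
      have hstep : pref * ∫ u in Ioo (1/2:ℝ) 1, φ u ≤ ∫ u in Ioo (1/2:ℝ) 1, ψ u * (4 * T ^ a) := by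
        rw [← integral_const_mul]
        apply setIntegral_mono_on (hInt2.const_mul pref) (hψint.mul_const _)
          measurableSet_Ioo
        intro u hu
        calc pref * φ u ≤ 4 * T ^ a * ψ u := hptwise u hu
          _ = ψ u * (4 * T ^ a) := by ring
      have hg : IntegrableOn (fun v : ℝ => v ^ γ₂ * Real.exp (-(ν * T * v))) (Ioi 0) := by
        have h := integrableOn_rpow_mul_exp_neg_mul_rpow
          (show (-1:ℝ) < γ₂ by linarith) zero_lt_one hνT
        simpa [Real.rpow_one, neg_mul, mul_assoc] using h
      have hginonneg : 0 ≤ᵐ[volume.restrict (Ioi (0:ℝ))]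
          fun v : ℝ => v ^ γ₂ * Real.exp (-(ν * T * v)) := by
        filter_upwards [ae_restrict_mem measurableSet_Ioi] with v hv
        exact mul_nonneg (Real.rpow_nonneg (le_of_lt hv) _) (Real.exp_pos _).le
      have hΓpos := Real.Gamma_pos_of_pos (show (0:ℝ) < γ₂ + 1 by linarith)
      have hsubst : ∫ u in Ioo (1/2:ℝ) 1, ψ u ≤
          (1/(ν*T)) ^ (γ₂+1) * Real.Gamma (γ₂+1) := by
        rw [hψ]
        calc ∫ u in Ioo (1/2:ℝ) 1, (1-u) ^ γ₂ * Real.exp (-(ν*T*(1-u)))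
            = ∫ u in Ioc (1/2:ℝ) 1, (1-u) ^ γ₂ * Real.exp (-(ν*T*(1-u))) :=
              (integral_Ioc_eq_integral_Ioo).symm
          _ = ∫ u in (1/2:ℝ)..1, (1-u) ^ γ₂ * Real.exp (-(ν*T*(1-u))) :=
              (intervalIntegral.integral_of_le (by norm_num)).symm
          _ = ∫ v in (0:ℝ)..(1/2), v ^ γ₂ * Real.exp (-(ν*T*v)) := by
              have hcs := intervalIntegral.integral_comp_sub_left (a := (1/2:ℝ)) (b := 1)
                (fun v : ℝ => v ^ γ₂ * Real.exp (-(ν*T*v))) 1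
              norm_num at hcs ⊢
              convert hcs using 2
          _ = ∫ v in Ioc (0:ℝ) (1/2), v ^ γ₂ * Real.exp (-(ν*T*v)) :=
              intervalIntegral.integral_of_le (by norm_num)
          _ ≤ ∫ v in Ioi (0:ℝ), v ^ γ₂ * Real.exp (-(ν*T*v)) :=
              setIntegral_mono_set hg hginonneg
                (HasSubset.Subset.eventuallyLE Ioc_subset_Ioi_self)
          _ = (1/(ν*T)) ^ (γ₂+1) * Real.Gamma (γ₂+1) := by
              have h := Real.integral_rpow_mul_exp_neg_mul_Ioi
                (show (0:ℝ) < γ₂ + 1 by linarith) hνT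
              simpa [add_sub_cancel_right] using h
      have hfin : (4 * T ^ a) * ((1/(ν*T)) ^ (γ₂+1) * Real.Gamma (γ₂+1)) ≤
          Real.Gamma (γ₂+1) * 4 / ν ^ (γ₂+1) := by
        have h5 : (1/(ν*T):ℝ) ^ (γ₂+1) = (1/ν) ^ (γ₂+1) * (1/T) ^ (γ₂+1) := by
          rw [← Real.mul_rpow (by positivity) (by positivity)]
          congr 1
          field_simp
        have e6 : (1/T:ℝ) ^ (γ₂+1) = T ^ (-(γ₂+1)) := by
          rw [one_div, Real.inv_rpow hT.le, ← Real.rpow_neg hT.le]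
        have h6 : T ^ a * (1/T) ^ (γ₂+1) ≤ 1 := by
          rw [e6, ← Real.rpow_add hT]
          exact Real.rpow_le_one_of_one_le_of_nonpos hT1 (by linarith)
        have h7 : (1/ν:ℝ) ^ (γ₂+1) = 1 / ν ^ (γ₂+1) := by
          rw [one_div, Real.inv_rpow hν.le, one_div]
        have h8 : (0:ℝ) ≤ 4 * Real.Gamma (γ₂+1) * (1/ν) ^ (γ₂+1) :=
          mul_nonneg (by linarith) (Real.rpow_nonneg (by positivity) _)
        calc (4 * T ^ a) * ((1/(ν*T)) ^ (γ₂+1) * Real.Gamma (γ₂+1))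
            = (4 * Real.Gamma (γ₂+1) * (1/ν) ^ (γ₂+1)) * (T ^ a * (1/T) ^ (γ₂+1)) := by
              rw [h5]; ring
          _ ≤ (4 * Real.Gamma (γ₂+1) * (1/ν) ^ (γ₂+1)) * 1 :=
              mul_le_mul_of_nonneg_left h6 h8
          _ = Real.Gamma (γ₂+1) * 4 / ν ^ (γ₂+1) := by rw [h7]; ring
      calc pref * ∫ u in Ioo (1/2:ℝ) 1, φ u
          ≤ ∫ u in Ioo (1/2:ℝ) 1, ψ u * (4 * T ^ a) := hstep
        _ = (∫ u in Ioo (1/2:ℝ) 1, ψ u) * (4 * T ^ a) := integral_mul_const _ _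
        _ ≤ ((1/(ν*T)) ^ (γ₂+1) * Real.Gamma (γ₂+1)) * (4 * T ^ a) :=
            mul_le_mul_of_nonneg_right hsubst
              (mul_nonneg (by norm_num) hTa)
        _ = (4 * T ^ a) * ((1/(ν*T)) ^ (γ₂+1) * Real.Gamma (γ₂+1)) := by ring
        _ ≤ Real.Gamma (γ₂ + 1) * 4 / ν ^ (γ₂ + 1) := hfin
        _ ≤ Real.Gamma (γ₂ + 1) * 4 / ν ^ (γ₂ + 1) + Real.exp ν := by
            linarith [Real.exp_pos ν]
  calc pref * ∫ u in Ioo (0:ℝ) 1, φ u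
      = pref * (∫ u in Ioc (0:ℝ) (1/2), φ u) + pref * ∫ u in Ioo (1/2:ℝ) 1, φ u := by
        rw [hsplit]; ring
    _ ≤ pref * (Real.exp (ν * T / 2) * (1/2)) + pref * ∫ u in Ioo (1/2:ℝ) 1, φ u := by
        have := mul_le_mul_of_nonneg_left hI1 hpref
        linarith
    _ ≤ 2 * (1 + ((Nat.ceil a + 2).factorial : ℝ) * (2 / ν) ^ (Nat.ceil a + 2)) +
        (Real.Gamma (γ₂ + 1) * 4 / ν ^ (γ₂ + 1) + Real.exp ν) := by
        linarith [hM1, hM3]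
    _ = B2c γ₂ ν a := by rw [B2c]; ring

end KeyB


lemma norm_real_mul_cpow (r : ℝ) (hr : 0 ≤ r) (τ : ℂ) (γ : ℝ) :
    ‖(((r:ℝ):ℂ) * τ) ^ ((γ:ℝ):ℂ)‖ = r ^ γ * ‖τ‖ ^ γ := by
  rw [Complex.norm_cpow_real, norm_mul, Complex.norm_real, Real.norm_eq_abs,
    abs_of_nonneg hr, Real.mul_rpow hr (norm_nonneg τ)]

/-- Norm estimate for the Volterra operator
`f ↦ τ^{-γ₁} ∫₀^τ (τ-s)^{γ₂} s^{γ₃} f(s,m) ds` on the space `E^d_{(ν,β,μ,Γ,ε)}`: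
there is `B₂ > 0` (depending on `γ₁,γ₂,γ₃,ν`) with
`‖T f‖ ≤ B₂ ‖f‖ |ε|^{Γ(γ₂+γ₃+1) - Γγ₁}`. The segment integral is parametrized by
`s = uτ`, `u ∈ (0,1)`. -/
theorem stmt_15 (γ₁ γ₂ γ₃ ν : ℝ) (hγ₁ : 0 ≤ γ₁) (hγ₂ : 0 ≤ γ₂) (hγ₃ : 0 ≤ γ₃)
    (h1 : γ₁ ≤ γ₂ + γ₃ + 1) (h2 : γ₃ ≤ γ₁) (hν : 0 < ν) :
    ∃ B₂ : ℝ, 0 < B₂ ∧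
      ∀ (ρ β μ Γ d η : ℝ), 0 < ρ → 0 < β → 1 < μ → 0 ≤ Γ → 0 < η →
      ∀ ε : ℂ, ε ≠ 0 →
      ∀ f : ℂ → ℝ → ℂ,
        (∀ x : ℝ, ContinuousOn (fun τ => f τ x)
          (closure (Metric.ball (0 : ℂ) ρ) ∪ {τ : ℂ | τ ≠ 0 ∧ |Complex.arg τ - d| < η})) →
      ∀ Cf : ℝ,
        (∀ τ : ℂ, (τ ∈ closure (Metric.ball (0 : ℂ) ρ) ∨
            (τ ≠ 0 ∧ |Complex.arg τ - d| < η)) →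
          ∀ x : ℝ,
            (1 + |x|) ^ μ * Real.exp (β * |x|) * (1 + ‖τ / ε ^ (Γ : ℂ)‖ ^ 2) *
              Real.exp (-ν * ‖τ / ε ^ (Γ : ℂ)‖) * ‖f τ x‖ ≤ Cf) →
      ∀ τ : ℂ, (τ ∈ closure (Metric.ball (0 : ℂ) ρ) ∨
          (τ ≠ 0 ∧ |Complex.arg τ - d| < η)) →
      ∀ x : ℝ,
        (1 + |x|) ^ μ * Real.exp (β * |x|) * (1 + ‖τ / ε ^ (Γ : ℂ)‖ ^ 2) *
            Real.exp (-ν * ‖τ / ε ^ (Γ : ℂ)‖) *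
            ‖τ ^ (-(γ₁ : ℂ)) * (τ * ∫ u in Set.Ioo (0 : ℝ) 1,
              (τ - (u : ℂ) * τ) ^ (γ₂ : ℂ) * ((u : ℂ) * τ) ^ (γ₃ : ℂ) * f ((u : ℂ) * τ) x)‖
          ≤ B₂ * Cf * ‖ε‖ ^ (Γ * (γ₂ + γ₃ + 1) - Γ * γ₁) := by
  have haux : 0 ≤ γ₂ + γ₃ + 1 - γ₁ := by linarith
  set a := γ₂ + γ₃ + 1 - γ₁ with hadef
  have ha' : a ≤ γ₂ + 1 := by rw [hadef]; linarith
  refine ⟨B2c γ₂ ν a, B2c_pos γ₂ ν a hγ₂ hν, ?_⟩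
  intro ρ β μ Γ d η hρ hβ hμ hΓ hη ε hε f hf Cf hC τ hτ x
  have hεn : (0:ℝ) < ‖ε‖ := norm_pos_iff.2 hε
  set E : ℝ := ‖ε‖ ^ Γ with hEdef
  have hE : 0 < E := Real.rpow_pos_of_pos hεn Γ
  have hnormε : ‖ε ^ (Γ:ℂ)‖ = E := by
    rw [hEdef, Complex.norm_cpow_real]
  have hCf : 0 ≤ Cf := by
    have h0 := hC 0 (Or.inl (subset_closure (Metric.mem_ball_self hρ))) 0
    have h0' : (0:ℝ) ≤ (1 + |(0:ℝ)|) ^ μ * Real.exp (β * |(0:ℝ)|) *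
        (1 + ‖(0:ℂ) / ε ^ (Γ:ℂ)‖ ^ 2) * Real.exp (-ν * ‖(0:ℂ) / ε ^ (Γ:ℂ)‖) * ‖f 0 0‖ := by
      positivity
    linarith
  have hRHSnonneg : 0 ≤ B2c γ₂ ν a * Cf * ‖ε‖ ^ (Γ * (γ₂ + γ₃ + 1) - Γ * γ₁) :=
    mul_nonneg (mul_nonneg (B2c_pos γ₂ ν a hγ₂ hν).le hCf)
      (Real.rpow_nonneg (norm_nonneg ε) _)
  by_cases hτ0 : τ = 0
  · subst hτ0
    simpa only [zero_mul, mul_zero, norm_zero] using hRHSnonneg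
  have hτn : (0:ℝ) < ‖τ‖ := norm_pos_iff.2 hτ0
  set T : ℝ := ‖τ‖ / E with hTdef
  have hT : 0 < T := div_pos hτn hE
  have hτE : ‖τ / ε ^ (Γ:ℂ)‖ = T := by rw [norm_div, hnormε, hTdef]
  rw [hτE]
  set A : ℝ := (1 + |x|) ^ μ * Real.exp (β * |x|) with hAdef
  have hA : 0 < A := by
    rw [hAdef]; positivity
  have domub : ∀ u : ℝ, u ∈ Set.Ioo (0:ℝ) 1 →
      (((u:ℂ) * τ ∈ closure (Metric.ball (0:ℂ) ρ) ∨
        ((u:ℂ) * τ ≠ 0 ∧ |Complex.arg ((u:ℂ) * τ) - d| < η)) ∧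
        ‖(u:ℂ) * τ / ε ^ (Γ:ℂ)‖ = u * T) := by
    intro u hu
    obtain ⟨h0, h1⟩ := hu
    constructor
    · rcases hτ with hball | ⟨hne, harg⟩
      · left
        rw [closure_ball _ (ne_of_gt hρ)] at hball ⊢
        rw [Metric.mem_closedBall, dist_zero_right] at hball ⊢
        calc ‖(u:ℂ) * τ‖ = ‖(u:ℂ)‖ * ‖τ‖ := norm_mul _ _
          _ = u * ‖τ‖ := by rw [Complex.norm_real, Real.norm_eq_abs, abs_of_pos h0]
          _ ≤ 1 * ρ := mul_le_mul h1.le hball (norm_nonneg τ) zero_le_one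
          _ = ρ := one_mul ρ
      · right
        refine ⟨mul_ne_zero (by exact_mod_cast h0.ne' : (u:ℂ) ≠ 0) hτ0, ?_⟩
        rw [Complex.arg_real_mul τ h0]
        exact harg
    · rw [norm_div, hnormε, norm_mul, Complex.norm_real, Real.norm_eq_abs,
        abs_of_pos h0, hTdef, mul_div_assoc]
  have hfb : ∀ u : ℝ, u ∈ Set.Ioo (0:ℝ) 1 →
      ‖f ((u:ℂ) * τ) x‖ ≤ Cf * Real.exp (ν * (u * T)) / (A * (1 + (u * T) ^ 2)) := by
    intro u hu
    obtain ⟨hmem, hub⟩ := domub u hu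
    have h := hC ((u:ℂ) * τ) hmem x
    rw [hub, ← hAdef] at h
    have hden : 0 < A * (1 + (u * T) ^ 2) := mul_pos hA (by positivity)
    rw [le_div_iff₀ hden]
    have e2 : Real.exp (-ν * (u * T)) * Real.exp (ν * (u * T)) = 1 := by
      rw [← Real.exp_add]
      have e0 : -ν * (u * T) + ν * (u * T) = 0 := by ring
      rw [e0, Real.exp_zero]
    have hmul := mul_le_mul_of_nonneg_right h (Real.exp_pos (ν * (u * T))).le
    calc ‖f ((u:ℂ) * τ) x‖ * (A * (1 + (u * T) ^ 2))
        = A * (1 + (u * T) ^ 2) * Real.exp (-ν * (u * T)) * ‖f ((u:ℂ) * τ) x‖ *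
            Real.exp (ν * (u * T)) := by
          rw [show A * (1 + (u * T) ^ 2) * Real.exp (-ν * (u * T)) * ‖f ((u:ℂ) * τ) x‖ *
              Real.exp (ν * (u * T)) = ‖f ((u:ℂ) * τ) x‖ * (A * (1 + (u * T) ^ 2)) *
              (Real.exp (-ν * (u * T)) * Real.exp (ν * (u * T))) from by ring, e2, mul_one]
      _ ≤ Cf * Real.exp (ν * (u * T)) := hmul
  have hg : ∀ u ∈ Set.Ioo (0:ℝ) 1,
      ‖(τ - (u:ℂ) * τ) ^ (γ₂:ℂ) * ((u:ℂ) * τ) ^ (γ₃:ℂ) * f ((u:ℂ) * τ) x‖ ≤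
        (Cf / A * ‖τ‖ ^ (γ₂ + γ₃)) *
          ((1 - u) ^ γ₂ * u ^ γ₃ * Real.exp (ν * (u * T)) / (1 + (u * T) ^ 2)) := by
    intro u hu
    obtain ⟨h0, h1⟩ := hu
    have e1 : τ - (u:ℂ) * τ = (((1 - u : ℝ)):ℂ) * τ := by push_cast; ring
    have p1 : (0:ℝ) ≤ (1 - u) ^ γ₂ := Real.rpow_nonneg (by linarith) _
    have p2 : (0:ℝ) ≤ u ^ γ₃ := Real.rpow_nonneg h0.le _
    have hττ : ‖τ‖ ^ γ₂ * ‖τ‖ ^ γ₃ = ‖τ‖ ^ (γ₂ + γ₃) := (Real.rpow_add hτn γ₂ γ₃).symm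
    calc ‖(τ - (u:ℂ) * τ) ^ (γ₂:ℂ) * ((u:ℂ) * τ) ^ (γ₃:ℂ) * f ((u:ℂ) * τ) x‖
        = ‖(τ - (u:ℂ) * τ) ^ (γ₂:ℂ)‖ * ‖((u:ℂ) * τ) ^ (γ₃:ℂ)‖ * ‖f ((u:ℂ) * τ) x‖ := by
          rw [norm_mul, norm_mul]
      _ = ((1 - u) ^ γ₂ * ‖τ‖ ^ γ₂) * (u ^ γ₃ * ‖τ‖ ^ γ₃) * ‖f ((u:ℂ) * τ) x‖ := by
          rw [e1, norm_real_mul_cpow (1 - u) (by linarith) τ γ₂,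
            norm_real_mul_cpow u h0.le τ γ₃]
      _ ≤ ((1 - u) ^ γ₂ * ‖τ‖ ^ γ₂) * (u ^ γ₃ * ‖τ‖ ^ γ₃) *
          (Cf * Real.exp (ν * (u * T)) / (A * (1 + (u * T) ^ 2))) := by
          apply mul_le_mul_of_nonneg_left (hfb u ⟨h0, h1⟩)
          exact mul_nonneg (mul_nonneg p1 (Real.rpow_nonneg hτn.le _))
            (mul_nonneg p2 (Real.rpow_nonneg hτn.le _))
      _ = (Cf / A * (‖τ‖ ^ γ₂ * ‖τ‖ ^ γ₃)) *
          ((1 - u) ^ γ₂ * u ^ γ₃ * Real.exp (ν * (u * T)) / (1 + (u * T) ^ 2)) := by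
          rw [div_eq_mul_inv, div_eq_mul_inv, div_eq_mul_inv, mul_inv]
          ring
      _ = (Cf / A * ‖τ‖ ^ (γ₂ + γ₃)) *
          ((1 - u) ^ γ₂ * u ^ γ₃ * Real.exp (ν * (u * T)) / (1 + (u * T) ^ 2)) := by
          rw [hττ]
  have hIntφ : MeasureTheory.IntegrableOn
      (fun u : ℝ => (1 - u) ^ γ₂ * u ^ γ₃ * Real.exp (ν * (u * T)) / (1 + (u * T) ^ 2))
      (Set.Ioo 0 1) := phi_integrable γ₂ γ₃ ν T hγ₂ hγ₃ hν.le hT.le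
  have hIle : ‖∫ u in Set.Ioo (0:ℝ) 1,
      (τ - (u:ℂ) * τ) ^ (γ₂:ℂ) * ((u:ℂ) * τ) ^ (γ₃:ℂ) * f ((u:ℂ) * τ) x‖ ≤
      (Cf / A * ‖τ‖ ^ (γ₂ + γ₃)) * ∫ u in Set.Ioo (0:ℝ) 1,
        (1 - u) ^ γ₂ * u ^ γ₃ * Real.exp (ν * (u * T)) / (1 + (u * T) ^ 2) := by
    refine le_trans (norm_integral_le_integral_norm _) ?_
    rw [← integral_const_mul]
    refine integral_mono_of_nonneg (ae_of_all _ fun u => norm_nonneg _)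
      (hIntφ.const_mul _) ?_
    filter_upwards [ae_restrict_mem measurableSet_Ioo] with u hu
    exact hg u hu
  have hτpow : ‖τ ^ (-(γ₁:ℂ))‖ = ‖τ‖ ^ (-γ₁) := by
    have e : (-(γ₁:ℂ)) = (((-γ₁ : ℝ)):ℂ) := by push_cast; ring
    rw [e, Complex.norm_cpow_real]
  have hexpeq : ‖ε‖ ^ (Γ * (γ₂ + γ₃ + 1) - Γ * γ₁) = E ^ a := by
    have e : Γ * (γ₂ + γ₃ + 1) - Γ * γ₁ = Γ * a := by rw [hadef]; ring
    rw [e, Real.rpow_mul (norm_nonneg ε), hEdef]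
  have hτa : ‖τ‖ ^ (-γ₁) * (‖τ‖ * ‖τ‖ ^ (γ₂ + γ₃)) = T ^ a * E ^ a := by
    have h1 : ‖τ‖ ^ (-γ₁) * (‖τ‖ * ‖τ‖ ^ (γ₂ + γ₃)) = ‖τ‖ ^ a := by
      calc ‖τ‖ ^ (-γ₁) * (‖τ‖ * ‖τ‖ ^ (γ₂ + γ₃))
          = ‖τ‖ ^ (-γ₁) * (‖τ‖ ^ (1:ℝ) * ‖τ‖ ^ (γ₂ + γ₃)) := by rw [Real.rpow_one]
        _ = ‖τ‖ ^ (-γ₁) * ‖τ‖ ^ (1 + (γ₂ + γ₃)) := by rw [← Real.rpow_add hτn]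
        _ = ‖τ‖ ^ (-γ₁ + (1 + (γ₂ + γ₃))) := by rw [← Real.rpow_add hτn]
        _ = ‖τ‖ ^ a := by rw [hadef]; ring_nf
    have h2 : ‖τ‖ = T * E := by
      rw [hTdef]; field_simp
    rw [h1, h2, Real.mul_rpow hT.le hE.le]
  have hAinv : A * A⁻¹ = 1 := mul_inv_cancel₀ hA.ne'
  have hφnonnegInt : 0 ≤ ∫ u in Set.Ioo (0:ℝ) 1,
      (1 - u) ^ γ₂ * u ^ γ₃ * Real.exp (ν * (u * T)) / (1 + (u * T) ^ 2) := by
    apply MeasureTheory.setIntegral_nonneg measurableSet_Ioo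
    intro u hu
    obtain ⟨h0, h1⟩ := hu
    exact div_nonneg (mul_nonneg (mul_nonneg (Real.rpow_nonneg (by linarith) _)
      (Real.rpow_nonneg h0.le _)) (Real.exp_pos _).le) (by positivity)
  have hkey := key_bound hγ₂ hγ₃ hν haux ha' hT (pre_bound ν a hν haux hT)
    (phi_integrable γ₂ γ₃ ν T hγ₂ hγ₃ hν.le hT.le)
  calc A * (1 + T ^ 2) * Real.exp (-ν * T) *
        ‖τ ^ (-(γ₁:ℂ)) * (τ * ∫ u in Set.Ioo (0:ℝ) 1,
          (τ - (u:ℂ) * τ) ^ (γ₂:ℂ) * ((u:ℂ) * τ) ^ (γ₃:ℂ) * f ((u:ℂ) * τ) x)‖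
      = (A * (1 + T ^ 2) * Real.exp (-ν * T)) * (‖τ‖ ^ (-γ₁) * (‖τ‖ *
          ‖∫ u in Set.Ioo (0:ℝ) 1,
            (τ - (u:ℂ) * τ) ^ (γ₂:ℂ) * ((u:ℂ) * τ) ^ (γ₃:ℂ) * f ((u:ℂ) * τ) x‖)) := by
        rw [norm_mul, norm_mul, hτpow]
    _ ≤ (A * (1 + T ^ 2) * Real.exp (-ν * T)) * (‖τ‖ ^ (-γ₁) * (‖τ‖ *
          ((Cf / A * ‖τ‖ ^ (γ₂ + γ₃)) * ∫ u in Set.Ioo (0:ℝ) 1,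
            (1 - u) ^ γ₂ * u ^ γ₃ * Real.exp (ν * (u * T)) / (1 + (u * T) ^ 2)))) := by
        apply mul_le_mul_of_nonneg_left _ (by positivity)
        apply mul_le_mul_of_nonneg_left _ (Real.rpow_nonneg hτn.le _)
        exact mul_le_mul_of_nonneg_left hIle hτn.le
    _ = Cf * ((1 + T ^ 2) * Real.exp (-ν * T) * T ^ a * ∫ u in Set.Ioo (0:ℝ) 1,
          (1 - u) ^ γ₂ * u ^ γ₃ * Real.exp (ν * (u * T)) / (1 + (u * T) ^ 2)) * E ^ a := by
        calc A * (1 + T ^ 2) * Real.exp (-ν * T) * (‖τ‖ ^ (-γ₁) * (‖τ‖ *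
              ((Cf / A * ‖τ‖ ^ (γ₂ + γ₃)) * ∫ u in Set.Ioo (0:ℝ) 1,
                (1 - u) ^ γ₂ * u ^ γ₃ * Real.exp (ν * (u * T)) / (1 + (u * T) ^ 2))))
            = (A * A⁻¹) * ((1 + T ^ 2) * Real.exp (-ν * T) * Cf *
                (∫ u in Set.Ioo (0:ℝ) 1,
                  (1 - u) ^ γ₂ * u ^ γ₃ * Real.exp (ν * (u * T)) / (1 + (u * T) ^ 2)) *
                (‖τ‖ ^ (-γ₁) * (‖τ‖ * ‖τ‖ ^ (γ₂ + γ₃)))) := by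
              rw [div_eq_mul_inv]; ring
          _ = (1 + T ^ 2) * Real.exp (-ν * T) * Cf *
                (∫ u in Set.Ioo (0:ℝ) 1,
                  (1 - u) ^ γ₂ * u ^ γ₃ * Real.exp (ν * (u * T)) / (1 + (u * T) ^ 2)) *
                (T ^ a * E ^ a) := by rw [hAinv, one_mul, hτa]
          _ = Cf * ((1 + T ^ 2) * Real.exp (-ν * T) * T ^ a * ∫ u in Set.Ioo (0:ℝ) 1,
                (1 - u) ^ γ₂ * u ^ γ₃ * Real.exp (ν * (u * T)) / (1 + (u * T) ^ 2)) *
                E ^ a := by ring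
    _ ≤ Cf * B2c γ₂ ν a * E ^ a := by
        apply mul_le_mul_of_nonneg_right _ (Real.rpow_nonneg hE.le a)
        exact mul_le_mul_of_nonneg_left hkey hCf
    _ = B2c γ₂ ν a * Cf * ‖ε‖ ^ (Γ * (γ₂ + γ₃ + 1) - Γ * γ₁) := by
        rw [hexpeq]; ring
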